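/- arXiv:2204.10900 — 2 statements merged into one kernel-verified Lean document; each statement's English description precedes it below -/
import Mathlib

section
/- (Iterated expansion estimate.) Let Ω be a set, T : Ω → Ω a bijection, A : Ω → SL(2l, ℂ), and suppose there exist ε > 0 and R ∈ ℕ such that for every ω ∈ Ω and every unit vector v ∈ ℂ^{2l} there is r ∈ ℤ with |r| ≤ R, r ≠ 0, and ‖A_r(ω)v‖ ≥ 1 + ε. Then, constructing recursively r_k, v_k, ω_k by choosing at each step such an r, normalizing v, and moving to T^{r}ω, one obtains, with R_k := r₁ + ⋯ + r_k: for every k ∈ ℕ, ‖A_{R_k}(ω)v‖ ≥ (1 + ε)^k. -/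
noncomputable section
open Matrix

variable {Ω : Type*} {ι : Type*} [Fintype ι] [DecidableEq ι]

/-- Forward transfer matrices: `fwd T A n ω = A(Tⁿ⁻¹ω) ⋯ A(ω)`. -/
def fwd (T : Equiv.Perm Ω) (A : Ω → Matrix ι ι ℂ) : ℕ → Ω → Matrix ι ι ℂ
  | 0, _ => 1
  | n + 1, ω => A ((⇑T)^[n] ω) * fwd T A n ω

/-- Backward transfer matrices: `bwd T A n ω = A(T⁻ⁿω)⁻¹ ⋯ A(T⁻¹ω)⁻¹`. -/
def bwd (T : Equiv.Perm Ω) (A : Ω → Matrix ι ι ℂ) : ℕ → Ω → Matrix ι ι ℂ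
  | 0, _ => 1
  | n + 1, ω => (A ((⇑T.symm)^[n + 1] ω))⁻¹ * bwd T A n ω

/-- The transfer matrices `Aₙ(ω)`, `n : ℤ`, of the cocycle `(T, A)`. -/
def transfer (T : Equiv.Perm Ω) (A : Ω → Matrix ι ι ℂ) (n : ℤ) (ω : Ω) : Matrix ι ι ℂ :=
  if 0 ≤ n then fwd T A n.toNat ω else bwd T A (-n).toNat ω

section AuxLemmas

variable (T : Equiv.Perm Ω) (A : Ω → Matrix ι ι ℂ)

lemma fwd_succ' (n : ℕ) (ω : Ω) : fwd T A (n + 1) ω = fwd T A n (T ω) * A ω := by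
  induction n generalizing ω with
  | zero => simp [fwd]
  | succ n ih =>
      show A ((⇑T)^[n+1] ω) * fwd T A (n+1) ω = fwd T A (n+1) (T ω) * A ω
      rw [ih, show fwd T A (n+1) (T ω) = A ((⇑T)^[n] (T ω)) * fwd T A n (T ω) from rfl,
        Function.iterate_succ_apply, mul_assoc]

lemma det_fwd (hA : ∀ ω, (A ω).det = 1) (n : ℕ) (ω : Ω) : (fwd T A n ω).det = 1 := by
  induction n generalizing ω with
  | zero => simp [fwd]
  | succ n ih => rw [show fwd T A (n+1) ω = A ((⇑T)^[n] ω) * fwd T A n ω from rfl,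
      det_mul, hA, ih, mul_one]

lemma bwd_eq (n : ℕ) (ω : Ω) : bwd T A n ω = (fwd T A n ((⇑T.symm)^[n] ω))⁻¹ := by
  induction n generalizing ω with
  | zero => simp [bwd, fwd]
  | succ n ih =>
      rw [show bwd T A (n+1) ω = (A ((⇑T.symm)^[n+1] ω))⁻¹ * bwd T A n ω from rfl, ih]
      rw [fwd_succ', Matrix.mul_inv_rev]
      congr 2
      rw [Function.iterate_succ_apply', Equiv.apply_symm_apply]

lemma det_transfer (hA : ∀ ω, (A ω).det = 1) (n : ℤ) (ω : Ω) :
    (transfer T A n ω).det = 1 := by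
  unfold transfer
  split
  · exact det_fwd T A hA _ ω
  · rw [bwd_eq, Matrix.det_nonsing_inv, det_fwd T A hA, Ring.inverse_one]

lemma transfer_succ (hA : ∀ ω, (A ω).det = 1) (n : ℤ) (ω : Ω) :
    transfer T A (n + 1) ω = A ((T ^ n) ω) * transfer T A n ω := by
  have hAu : ∀ x, IsUnit (A x).det := fun x => by rw [hA]; exact isUnit_one
  rcases le_or_gt 0 n with hn | hn
  · have h1 : transfer T A n ω = fwd T A n.toNat ω := if_pos hn
    have h2 : transfer T A (n + 1) ω = fwd T A (n.toNat + 1) ω := by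
      rw [transfer, if_pos (by omega : (0:ℤ) ≤ n + 1),
        show (n + 1).toNat = n.toNat + 1 by omega]
    have hT : (T : Equiv.Perm Ω) ^ n = T ^ n.toNat := by
      rw [← zpow_natCast]; congr 1; omega
    rw [h1, h2, show fwd T A (n.toNat + 1) ω = A ((⇑T)^[n.toNat] ω) * fwd T A n.toNat ω from rfl,
      hT, ← Equiv.Perm.iterate_eq_pow]
  · have h1 : transfer T A n ω = bwd T A (-n).toNat ω := if_neg (by omega)
    obtain ⟨m, hm⟩ : ∃ m : ℕ, (-n).toNat = m + 1 := ⟨(-n).toNat - 1, by omega⟩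
    have h2 : transfer T A (n + 1) ω = bwd T A m ω := by
      rcases eq_or_lt_of_le (show n + 1 ≤ 0 by omega) with he | hlt
      · rw [transfer, if_pos (le_of_eq he.symm), show (n + 1).toNat = 0 by omega]
        have hm0 : m = 0 := by omega
        rw [hm0]; rfl
      · rw [transfer, if_neg (by omega), show (-(n + 1)).toNat = m by omega]
    have hT : (⇑T.symm)^[m + 1] ω = (T ^ n) ω := by
      have : (T : Equiv.Perm Ω) ^ n = (T⁻¹) ^ (m + 1 : ℕ) := by
        rw [inv_pow, ← zpow_natCast, ← _root_.zpow_neg]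
        congr 1; omega
      rw [this, ← Equiv.Perm.iterate_eq_pow]
      rfl
    rw [h1, h2, hm, show bwd T A (m+1) ω = (A ((⇑T.symm)^[m + 1] ω))⁻¹ * bwd T A m ω from rfl,
      hT, ← mul_assoc, Matrix.mul_nonsing_inv _ (hAu _), one_mul]

lemma transfer_pred (hA : ∀ ω, (A ω).det = 1) (n : ℤ) (ω : Ω) :
    transfer T A (n - 1) ω = (A ((T ^ (n - 1)) ω))⁻¹ * transfer T A n ω := by
  have hAu : ∀ x, IsUnit (A x).det := fun x => by rw [hA]; exact isUnit_one
  have := transfer_succ T A hA (n - 1) ω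
  rw [sub_add_cancel] at this
  rw [this, ← mul_assoc, Matrix.nonsing_inv_mul _ (hAu _), one_mul]

lemma transfer_zero (ω : Ω) : transfer T A 0 ω = 1 := by
  rw [transfer, if_pos le_rfl]; rfl

lemma transfer_add (hA : ∀ ω, (A ω).det = 1) (m n : ℤ) (ω : Ω) :
    transfer T A (m + n) ω = transfer T A m ((T ^ n) ω) * transfer T A n ω := by
  induction m using Int.induction_on with
  | zero => rw [zero_add, transfer_zero, one_mul]
  | succ m ih =>
      rw [show (m : ℤ) + 1 + n = (m + n) + 1 by ring, transfer_succ T A hA, ih,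
        transfer_succ T A hA, mul_assoc]
      congr 2
      rw [← Equiv.Perm.mul_apply, ← _root_.zpow_add]
  | pred m ih =>
      rw [show (-(m:ℤ) - 1) + n = (-(m:ℤ) + n) - 1 by ring, transfer_pred T A hA, ih,
        transfer_pred T A hA, mul_assoc]
      congr 2
      rw [← Equiv.Perm.mul_apply, ← _root_.zpow_add]
      ring_nf

lemma transfer_mulVec_ne_zero (hA : ∀ ω, (A ω).det = 1) (n : ℤ) (ω : Ω)
    (v : ι → ℂ) (hv : v ≠ 0) : (transfer T A n ω).mulVec v ≠ 0 := by
  intro hc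
  have hd : IsUnit (transfer T A n ω).det := by
    rw [det_transfer T A hA]; exact isUnit_one
  have h2 := congrArg ((transfer T A n ω)⁻¹.mulVec) hc
  rw [Matrix.mulVec_mulVec, Matrix.nonsing_inv_mul _ hd, Matrix.one_mulVec,
    Matrix.mulVec_zero] at h2
  exact hv h2

end AuxLemmas

/-- iterated expansion estimate: if every `(ω, v)` with `‖v‖ = 1` admits a
nonzero `r` with `|r| ≤ R` and `‖A_r(ω)v‖ ≥ 1 + ε`, then along a recursively constructed
sequence of times `R_k` (with nonzero steps of size at most `R`) one has
`‖A_{R_k}(ω)v‖ ≥ (1 + ε)^k`. -/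
theorem stmt3 {l : ℕ} (T : Equiv.Perm Ω) (A : Ω → Matrix (Fin (2 * l)) (Fin (2 * l)) ℂ)
    (hSL : ∀ ω, (A ω).det = 1) (ε : ℝ) (hε : 0 < ε) (R : ℕ)
    (h : ∀ (ω : Ω) (v : Fin (2 * l) → ℂ), ‖v‖ = 1 →
      ∃ r : ℤ, r ≠ 0 ∧ |r| ≤ (R : ℤ) ∧ 1 + ε ≤ ‖(transfer T A r ω).mulVec v‖) :
    ∀ (ω : Ω) (v : Fin (2 * l) → ℂ), ‖v‖ = 1 →
      ∃ Rseq : ℕ → ℤ, Rseq 0 = 0 ∧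
        (∀ k : ℕ, Rseq (k + 1) - Rseq k ≠ 0 ∧ |Rseq (k + 1) - Rseq k| ≤ (R : ℤ)) ∧
        ∀ k : ℕ, (1 + ε) ^ k ≤ ‖(transfer T A (Rseq k) ω).mulVec v‖ := by
  intro ω v hv
  have hv0 : v ≠ 0 := fun h0 => by simp [h0] at hv
  have hw0 : ∀ s : ℤ, (transfer T A s ω).mulVec v ≠ 0 :=
    fun s => transfer_mulVec_ne_zero T A hSL s ω v hv0
  have key : ∀ s : ℤ, ∃ r : ℤ, r ≠ 0 ∧ |r| ≤ (R : ℤ) ∧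
      (1 + ε) * ‖(transfer T A s ω).mulVec v‖ ≤ ‖(transfer T A (r + s) ω).mulVec v‖ := by
    intro s
    set w := (transfer T A s ω).mulVec v with hw
    have hnw : (0:ℝ) < ‖w‖ := norm_pos_iff.mpr (hw0 s)
    obtain ⟨r, hr0, hrR, hre⟩ := h ((T ^ s) ω) (‖w‖⁻¹ • w) (norm_smul_inv_norm (hw0 s))
    refine ⟨r, hr0, hrR, ?_⟩
    have hc : (transfer T A (r + s) ω).mulVec v
        = (transfer T A r ((T ^ s) ω)).mulVec w := by
      rw [transfer_add T A hSL, ← Matrix.mulVec_mulVec, hw]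
    have hsm : (transfer T A r ((T ^ s) ω)).mulVec w
        = ‖w‖ • (transfer T A r ((T ^ s) ω)).mulVec (‖w‖⁻¹ • w) := by
      rw [Matrix.mulVec_smul, smul_smul, mul_inv_cancel₀ (ne_of_gt hnw), one_smul]
    rw [hc, hsm, norm_smul, Real.norm_eq_abs, abs_of_pos hnw, mul_comm]
    exact mul_le_mul_of_nonneg_left hre (le_of_lt hnw)
  choose step hstep0 hstepR hstepE using key
  set F : ℕ → ℤ := fun k => Nat.rec (0 : ℤ) (fun _ s => step s + s) k with hF
  have hFsucc : ∀ k, F (k + 1) = step (F k) + F k := fun k => rfl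
  refine ⟨F, rfl, ?_, ?_⟩
  · intro k
    rw [hFsucc, add_sub_cancel_right]
    exact ⟨hstep0 _, hstepR _⟩
  · intro k
    induction k with
    | zero =>
        simp only [pow_zero]
        rw [show F 0 = 0 from rfl, transfer_zero, Matrix.one_mulVec, hv]
    | succ k ih =>
        rw [pow_succ, mul_comm, hFsucc]
        calc (1 + ε) * (1 + ε) ^ k
            ≤ (1 + ε) * ‖(transfer T A (F k) ω).mulVec v‖ :=
              mul_le_mul_of_nonneg_left ih (by linarith)
          _ ≤ ‖(transfer T A (step (F k) + F k) ω).mulVec v‖ := hstepE _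
end
end

section
/- Let Ω be a compact metric space and B : Ω × S^{2l-1} × ℂ → ℝ defined by Bₙ(z, ω, v) := max{‖Aₙ(z, ω)v‖, ‖A₋ₙ(z, ω)v‖}, where A_z : Ω → SL(2l, ℂ) depends continuously and jointly on (ω, z) (being built from continuous maps D, V : Ω → M(l, ℝ) with D(ω) invertible via the Jacobi cocycle matrix). Then for each fixed n, the function z ↦ sup over (ω, v) ∈ Ω × S^{2l-1} of Bₙ(z, ω, v) is lower semicontinuous, and consequently the set {z ∈ ℂ : sup_{(ω,v)} Bₙ(z, ω, v) > 3/2} is open; in particular, the set {z ∈ ℂ : (T, A_z) ∈ UG} is open in ℂ. -/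
noncomputable section
open Matrix

variable {Ω : Type*} {ι : Type*} [Fintype ι] [DecidableEq ι]

/-- `M.mulVec` regarded as a map of Euclidean spaces. -/
def mv (M : Matrix ι ι ℂ) (v : EuclideanSpace ℂ ι) : EuclideanSpace ℂ ι := WithLp.toLp 2 (M.mulVec v)

/-- The Jacobi cocycle matrix `A_z(ω) = [[D⁻¹(z − V), −D⁻¹], [D, 0]]`. -/
def jacobiA {l : ℕ} (D V : Matrix (Fin l) (Fin l) ℝ) (z : ℂ) :
    Matrix (Fin l ⊕ Fin l) (Fin l ⊕ Fin l) ℂ :=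
  fromBlocks ((D.map Complex.ofReal)⁻¹ * (z • 1 - V.map Complex.ofReal))
    (-(D.map Complex.ofReal)⁻¹) (D.map Complex.ofReal) 0

/-- `Bₙ(z, ω, v) = max (‖Aₙ(z, ω)v‖, ‖A₋ₙ(z, ω)v‖)` for the Jacobi cocycle. -/
def Bfun {l : ℕ} (T : Equiv.Perm Ω) (D V : Ω → Matrix (Fin l) (Fin l) ℝ) (n : ℕ) (z : ℂ)
    (ω : Ω) (v : EuclideanSpace ℂ (Fin l ⊕ Fin l)) : ℝ :=
  max ‖mv (transfer T (fun ω' => jacobiA (D ω') (V ω') z) (n : ℤ) ω) v‖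
    ‖mv (transfer T (fun ω' => jacobiA (D ω') (V ω') z) (-(n : ℤ)) ω) v‖

/-- The uniform exponential growth condition for the Jacobi cocycle at energy `z`. -/
def UG {l : ℕ} (T : Equiv.Perm Ω) (D V : Ω → Matrix (Fin l) (Fin l) ℝ) (z : ℂ) : Prop :=
  ∃ β : ℝ, 0 < β ∧ ∃ lam : ℝ, 1 < lam ∧
    ∀ (ω : Ω) (v : EuclideanSpace ℂ (Fin l ⊕ Fin l)), v ≠ 0 →
      (∀ n : ℕ, β * lam ^ n * ‖v‖ ≤
        ‖mv (transfer T (fun ω' => jacobiA (D ω') (V ω') z) (n : ℤ) ω) v‖) ∨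
      (∀ n : ℕ, β * lam ^ n * ‖v‖ ≤
        ‖mv (transfer T (fun ω' => jacobiA (D ω') (V ω') z) (-(n : ℤ)) ω) v‖)


set_option linter.unusedSectionVars false

namespace Stmt5Aux

lemma fwd_zero (T : Equiv.Perm Ω) (A : Ω → Matrix ι ι ℂ) (ω : Ω) : fwd T A 0 ω = 1 := rfl

lemma fwd_succ (T : Equiv.Perm Ω) (A : Ω → Matrix ι ι ℂ) (n : ℕ) (ω : Ω) :
    fwd T A (n + 1) ω = A ((⇑T)^[n] ω) * fwd T A n ω := rfl

lemma bwd_zero (T : Equiv.Perm Ω) (A : Ω → Matrix ι ι ℂ) (ω : Ω) : bwd T A 0 ω = 1 := rfl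

lemma bwd_succ (T : Equiv.Perm Ω) (A : Ω → Matrix ι ι ℂ) (n : ℕ) (ω : Ω) :
    bwd T A (n + 1) ω = (A ((⇑T.symm)^[n + 1] ω))⁻¹ * bwd T A n ω := rfl

lemma fwd_succ' (T : Equiv.Perm Ω) (A : Ω → Matrix ι ι ℂ) :
    ∀ (n : ℕ) (ω : Ω), fwd T A (n + 1) ω = fwd T A n (T ω) * A ω
  | 0, ω => by simp [fwd]
  | n + 1, ω => by
      rw [fwd_succ, fwd_succ' T A n ω, ← Matrix.mul_assoc, fwd_succ,
        Function.iterate_succ_apply]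

lemma bwd_succ' (T : Equiv.Perm Ω) (A : Ω → Matrix ι ι ℂ) :
    ∀ (n : ℕ) (ω : Ω), bwd T A (n + 1) ω = bwd T A n (T.symm ω) * (A (T.symm ω))⁻¹
  | 0, ω => by simp [bwd]
  | n + 1, ω => by
      rw [bwd_succ, bwd_succ' T A n ω, ← Matrix.mul_assoc, bwd_succ,
        Function.iterate_succ_apply]

lemma fwd_add (T : Equiv.Perm Ω) (A : Ω → Matrix ι ι ℂ) :
    ∀ (a b : ℕ) (ω : Ω), fwd T A (a + b) ω = fwd T A a ((⇑T)^[b] ω) * fwd T A b ω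
  | 0, b, ω => by simp [fwd]
  | a + 1, b, ω => by
      have h : a + 1 + b = (a + b) + 1 := by omega
      rw [h, fwd_succ, fwd_add T A a b ω, fwd_succ, Function.iterate_add_apply,
        Matrix.mul_assoc]

lemma bwd_add (T : Equiv.Perm Ω) (A : Ω → Matrix ι ι ℂ) :
    ∀ (a b : ℕ) (ω : Ω), bwd T A (a + b) ω = bwd T A a ((⇑T.symm)^[b] ω) * bwd T A b ω
  | 0, b, ω => by simp [bwd]
  | a + 1, b, ω => by
      have h : a + 1 + b = (a + b) + 1 := by omega
      rw [h, bwd_succ, bwd_add T A a b ω, bwd_succ, ← Function.iterate_add_apply]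
      simp [show a + 1 + b = a + b + 1 from by omega, Matrix.mul_assoc]

lemma symm_iter (T : Equiv.Perm Ω) (n : ℕ) (ω : Ω) : (⇑T.symm)^[n] ((⇑T)^[n] ω) = ω :=
  (Function.LeftInverse.iterate T.symm_apply_apply n) ω

lemma iter_symm (T : Equiv.Perm Ω) (n : ℕ) (ω : Ω) : (⇑T)^[n] ((⇑T.symm)^[n] ω) = ω :=
  (Function.LeftInverse.iterate T.apply_symm_apply n) ω

lemma bwd_fwd (T : Equiv.Perm Ω) (A : Ω → Matrix ι ι ℂ) (hA : ∀ ω, IsUnit (A ω).det) :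
    ∀ (n : ℕ) (ω : Ω), bwd T A n ((⇑T)^[n] ω) * fwd T A n ω = 1
  | 0, ω => by simp [fwd, bwd]
  | n + 1, ω => by
      rw [fwd_succ' , bwd_succ, symm_iter, Function.iterate_succ_apply,
        Matrix.mul_assoc, ← Matrix.mul_assoc (bwd T A n _), bwd_fwd T A hA n (T ω),
        Matrix.one_mul, nonsing_inv_mul _ (hA ω)]

lemma fwd_bwd (T : Equiv.Perm Ω) (A : Ω → Matrix ι ι ℂ) (hA : ∀ ω, IsUnit (A ω).det) :
    ∀ (n : ℕ) (ω : Ω), fwd T A n ((⇑T.symm)^[n] ω) * bwd T A n ω = 1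
  | 0, ω => by simp [fwd, bwd]
  | n + 1, ω => by
      have e : (⇑T)^[n] ((⇑T.symm)^[n + 1] ω) = T.symm ω := by
        rw [Function.iterate_succ_apply, iter_symm]
      rw [bwd_succ', fwd_succ, e, Function.iterate_succ_apply,
        Matrix.mul_assoc, ← Matrix.mul_assoc (fwd T A n _), fwd_bwd T A hA n (T.symm ω),
        Matrix.one_mul, mul_nonsing_inv _ (hA (T.symm ω))]

lemma bwd_eq_fwd (T : Equiv.Perm Ω) (A : Ω → Matrix ι ι ℂ) :
    ∀ (n : ℕ) (ω : Ω), bwd T A n ω = fwd T.symm (fun ω' => (A (T.symm ω'))⁻¹) n ω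
  | 0, _ => rfl
  | n + 1, ω => by
      rw [bwd_succ, fwd_succ, bwd_eq_fwd T A n ω, Function.iterate_succ_apply']

lemma fwd_eq_bwd (T : Equiv.Perm Ω) (A : Ω → Matrix ι ι ℂ) (hA : ∀ ω, IsUnit (A ω).det) :
    ∀ (n : ℕ) (ω : Ω), fwd T A n ω = bwd T.symm (fun ω' => (A (T.symm ω'))⁻¹) n ω
  | 0, _ => rfl
  | n + 1, ω => by
      rw [fwd_succ, bwd_succ, fwd_eq_bwd T A hA n ω]
      congr 1
      show A ((⇑T)^[n] ω) = ((A (T.symm ((⇑T)^[n+1] ω)))⁻¹)⁻¹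
      rw [show T.symm ((⇑T)^[n+1] ω) = (⇑T)^[n] ω from by
        rw [Function.iterate_succ_apply']; exact T.symm_apply_apply _]
      rw [Matrix.nonsing_inv_nonsing_inv _ (hA _)]

lemma transfer_coe (T : Equiv.Perm Ω) (A : Ω → Matrix ι ι ℂ) (n : ℕ) (ω : Ω) :
    transfer T A (n : ℤ) ω = fwd T A n ω := by simp [transfer]

lemma transfer_neg_coe (T : Equiv.Perm Ω) (A : Ω → Matrix ι ι ℂ) (n : ℕ) (ω : Ω) :
    transfer T A (-(n : ℤ)) ω = bwd T A n ω := by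
  cases n with
  | zero => simp [transfer, fwd, bwd]
  | succ n =>
      rw [transfer, if_neg (by omega)]
      norm_num

lemma mv_mul (M N : Matrix ι ι ℂ) (v : EuclideanSpace ℂ ι) :
    mv (M * N) v = mv M (mv N v) := by
  show WithLp.toLp 2 ((M * N).mulVec (WithLp.ofLp v)) =
    WithLp.toLp 2 (M.mulVec (N.mulVec (WithLp.ofLp v)))
  rw [Matrix.mulVec_mulVec]

lemma mv_one (v : EuclideanSpace ℂ ι) : mv 1 v = v := by
  simp [mv]

lemma mv_smul (M : Matrix ι ι ℂ) (c : ℂ) (v : EuclideanSpace ℂ ι) :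
    mv M (c • v) = c • mv M v := by
  simp [mv, Matrix.mulVec_smul]

lemma mv_zero (M : Matrix ι ι ℂ) : mv M (0 : EuclideanSpace ℂ ι) = 0 := by
  simp [mv]

end Stmt5Aux


namespace Stmt5Aux

/-- Explicit inverse of the Jacobi cocycle matrix. -/
def jacobiN {l : ℕ} (D V : Matrix (Fin l) (Fin l) ℝ) (z : ℂ) :
    Matrix (Fin l ⊕ Fin l) (Fin l ⊕ Fin l) ℂ :=
  fromBlocks 0 (D.map Complex.ofReal)⁻¹ (-(D.map Complex.ofReal))
    ((z • 1 - V.map Complex.ofReal) * (D.map Complex.ofReal)⁻¹)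

lemma det_map_unit {l : ℕ} {D : Matrix (Fin l) (Fin l) ℝ} (h : IsUnit D.det) :
    IsUnit ((D.map Complex.ofReal)).det := by
  have h2 := RingHom.map_det Complex.ofRealHom D
  rw [RingHom.mapMatrix_apply] at h2
  rw [show (D.map Complex.ofReal) = D.map Complex.ofRealHom from rfl, ← h2]
  exact h.map Complex.ofRealHom

lemma jacobiA_mul_N {l : ℕ} (D V : Matrix (Fin l) (Fin l) ℝ) (z : ℂ) (h : IsUnit D.det) :
    jacobiA D V z * jacobiN D V z = 1 := by
  have hU := det_map_unit h
  have e1 := nonsing_inv_mul _ hU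
  have e2 := mul_nonsing_inv _ hU
  rw [jacobiA, jacobiN, fromBlocks_multiply]
  simp only [Matrix.mul_zero, Matrix.zero_mul, Matrix.neg_mul, Matrix.mul_neg, neg_neg,
    zero_add, add_zero, Matrix.mul_assoc, e1, e2, add_neg_cancel]
  exact fromBlocks_one

lemma jacobiA_det_unit {l : ℕ} (D V : Matrix (Fin l) (Fin l) ℝ) (z : ℂ) (h : IsUnit D.det) :
    IsUnit (jacobiA D V z).det :=
  Matrix.isUnit_det_of_right_inverse (jacobiA_mul_N D V z h)

lemma jacobiA_inv {l : ℕ} (D V : Matrix (Fin l) (Fin l) ℝ) (z : ℂ) (h : IsUnit D.det) :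
    (jacobiA D V z)⁻¹ = jacobiN D V z :=
  Matrix.inv_eq_right_inv (jacobiA_mul_N D V z h)

section Cont

variable {X : Type*} [TopologicalSpace X] {l : ℕ}

lemma cont_map_inv {D : X → Matrix (Fin l) (Fin l) ℝ} (hD : Continuous D)
    (hDinv : ∀ x, IsUnit (D x).det) :
    Continuous fun x => ((D x).map Complex.ofReal)⁻¹ := by
  have hc : Continuous fun x => (D x).map Complex.ofReal :=
    hD.matrix_map Complex.continuous_ofReal
  have hdet : Continuous fun x => ((D x).map Complex.ofReal).det := hc.matrix_det
  have hne : ∀ x, ((D x).map Complex.ofReal).det ≠ 0 := fun x =>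
    (det_map_unit (hDinv x)).ne_zero
  have : Continuous fun x => (((D x).map Complex.ofReal).det)⁻¹ • ((D x).map Complex.ofReal).adjugate :=
    (hdet.inv₀ hne).smul hc.matrix_adjugate
  convert this using 1
  funext x
  rw [Matrix.inv_def, Ring.inverse_eq_inv']

lemma cont_jacobiA {D V : X → Matrix (Fin l) (Fin l) ℝ} (hD : Continuous D)
    (hV : Continuous V) (hDinv : ∀ x, IsUnit (D x).det) :
    Continuous fun p : X × ℂ => jacobiA (D p.1) (V p.1) p.2 := by
  have hDc : Continuous fun p : X × ℂ => (D p.1).map Complex.ofReal :=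
    (hD.comp continuous_fst).matrix_map Complex.continuous_ofReal
  have hDci : Continuous fun p : X × ℂ => ((D p.1).map Complex.ofReal)⁻¹ :=
    (cont_map_inv hD hDinv).comp continuous_fst
  have hVc : Continuous fun p : X × ℂ => (V p.1).map Complex.ofReal :=
    (hV.comp continuous_fst).matrix_map Complex.continuous_ofReal
  have hz : Continuous fun p : X × ℂ => (p.2 • 1 - (V p.1).map Complex.ofReal :
      Matrix (Fin l) (Fin l) ℂ) :=
    (continuous_snd.smul continuous_const).sub hVc
  exact (hDci.matrix_mul hz).matrix_fromBlocks hDci.neg hDc continuous_const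

lemma cont_jacobiN {D V : X → Matrix (Fin l) (Fin l) ℝ} (hD : Continuous D)
    (hV : Continuous V) (hDinv : ∀ x, IsUnit (D x).det) :
    Continuous fun p : X × ℂ => jacobiN (D p.1) (V p.1) p.2 := by
  have hDc : Continuous fun p : X × ℂ => (D p.1).map Complex.ofReal :=
    (hD.comp continuous_fst).matrix_map Complex.continuous_ofReal
  have hDci : Continuous fun p : X × ℂ => ((D p.1).map Complex.ofReal)⁻¹ :=
    (cont_map_inv hD hDinv).comp continuous_fst
  have hVc : Continuous fun p : X × ℂ => (V p.1).map Complex.ofReal :=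
    (hV.comp continuous_fst).matrix_map Complex.continuous_ofReal
  have hz : Continuous fun p : X × ℂ => (p.2 • 1 - (V p.1).map Complex.ofReal :
      Matrix (Fin l) (Fin l) ℂ) :=
    (continuous_snd.smul continuous_const).sub hVc
  exact continuous_const.matrix_fromBlocks hDci hDc.neg (hz.matrix_mul hDci)

end Cont

end Stmt5Aux

namespace Stmt5Aux

section Cont2

variable [TopologicalSpace Ω] {l : ℕ} {D V : Ω → Matrix (Fin l) (Fin l) ℝ}

lemma cont_fwd (T : Ω ≃ₜ Ω) (hD : Continuous D) (hV : Continuous V)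
    (hDinv : ∀ ω, IsUnit (D ω).det) (n : ℕ) :
    Continuous fun p : Ω × ℂ =>
      fwd T.toEquiv (fun ω => jacobiA (D ω) (V ω) p.2) n p.1 := by
  induction n with
  | zero => exact continuous_const
  | succ n ih =>
      have hTn : Continuous fun ω : Ω => (⇑T.toEquiv)^[n] ω := T.continuous.iterate n
      have h1 : Continuous fun p : Ω × ℂ => ((⇑T.toEquiv)^[n] p.1, p.2) :=
        (hTn.comp continuous_fst).prodMk continuous_snd
      exact ((cont_jacobiA hD hV hDinv).comp h1).matrix_mul ih

lemma cont_bwd (T : Ω ≃ₜ Ω) (hD : Continuous D) (hV : Continuous V)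
    (hDinv : ∀ ω, IsUnit (D ω).det) (n : ℕ) :
    Continuous fun p : Ω × ℂ =>
      bwd T.toEquiv (fun ω => jacobiA (D ω) (V ω) p.2) n p.1 := by
  induction n with
  | zero => exact continuous_const
  | succ n ih =>
      have key : (fun p : Ω × ℂ =>
          bwd T.toEquiv (fun ω => jacobiA (D ω) (V ω) p.2) (n + 1) p.1) =
          fun p : Ω × ℂ =>
            jacobiN (D ((⇑T.toEquiv.symm)^[n + 1] p.1)) (V ((⇑T.toEquiv.symm)^[n + 1] p.1)) p.2
              * bwd T.toEquiv (fun ω => jacobiA (D ω) (V ω) p.2) n p.1 := by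
        funext p
        rw [bwd_succ, jacobiA_inv _ _ _ (hDinv _)]
      rw [key]
      have hTn : Continuous fun ω : Ω => (⇑T.toEquiv.symm)^[n + 1] ω :=
        T.symm.continuous.iterate (n + 1)
      have h1 : Continuous fun p : Ω × ℂ => ((⇑T.toEquiv.symm)^[n + 1] p.1, p.2) :=
        (hTn.comp continuous_fst).prodMk continuous_snd
      exact ((cont_jacobiN hD hV hDinv).comp h1).matrix_mul ih

end Cont2

lemma cont_mv {X : Type*} [TopologicalSpace X] {F : X → Matrix ι ι ℂ}
    {g : X → EuclideanSpace ℂ ι} (hF : Continuous F) (hg : Continuous g) :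
    Continuous fun x => mv (F x) (g x) :=
  (PiLp.continuous_toLp 2 fun _ : ι => ℂ).comp
    (hF.matrix_mulVec ((PiLp.continuous_ofLp 2 fun _ : ι => ℂ).comp hg))

end Stmt5Aux

namespace Stmt5Aux

lemma norm_inv_smul {v : EuclideanSpace ℂ ι} (hv : 0 < ‖v‖) :
    ‖((‖v‖ : ℂ))⁻¹ • v‖ = 1 := by
  rw [norm_smul, norm_inv, Complex.norm_real, Real.norm_eq_abs, abs_of_pos hv,
    inv_mul_cancel₀ hv.ne']

lemma growth (T : Equiv.Perm Ω) (A : Ω → Matrix ι ι ℂ) (hA : ∀ ω, IsUnit (A ω).det)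
    (n : ℕ)
    (h : ∀ (ω : Ω) (v : EuclideanSpace ℂ ι), ‖v‖ = 1 →
      3 / 2 ≤ max ‖mv (fwd T A n ω) v‖ ‖mv (bwd T A n ω) v‖)
    (ω : Ω) (v : EuclideanSpace ℂ ι) (hv : ‖v‖ = 1)
    (h1 : 3 / 2 ≤ ‖mv (fwd T A n ω) v‖) :
    ∀ k : ℕ, ((3 : ℝ) / 2) ^ k ≤ ‖mv (fwd T A (k * n) ω) v‖ := by
  set w : ℕ → EuclideanSpace ℂ ι := fun k => mv (fwd T A (k * n) ω) v with hw
  have w0 : w 0 = v := by simp [hw, fwd_zero, mv_one]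
  have wsucc : ∀ k : ℕ, w (k + 1) = mv (fwd T A n ((⇑T)^[k * n] ω)) (w k) := by
    intro k
    have e : (k + 1) * n = n + k * n := by ring
    rw [hw]
    simp only
    rw [e, fwd_add, mv_mul]
  have wback : ∀ k : ℕ, mv (bwd T A n ((⇑T)^[(k + 1) * n] ω)) (w (k + 1)) = w k := by
    intro k
    have e : (k + 1) * n = n + k * n := by ring
    rw [wsucc k, ← mv_mul, e, Function.iterate_add_apply, bwd_fwd T A hA, mv_one]
  have main : ∀ k : ℕ, ((3:ℝ)/2) ^ k ≤ ‖w k‖ ∧ (3:ℝ)/2 * ‖w k‖ ≤ ‖w (k + 1)‖ := by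
    intro k
    induction k with
    | zero =>
        constructor
        · simp [w0, hv]
        · rw [wsucc 0]
          simp only [Nat.zero_mul, Function.iterate_zero, id_eq, w0, hv]
          simpa [hv] using h1
    | succ k ih =>
        obtain ⟨ih1, ih2⟩ := ih
        have hk1 : ((3:ℝ)/2) ^ (k + 1) ≤ ‖w (k + 1)‖ := by
          calc ((3:ℝ)/2) ^ (k + 1) = 3/2 * (3/2) ^ k := by ring
          _ ≤ 3/2 * ‖w k‖ := by nlinarith
          _ ≤ ‖w (k + 1)‖ := ih2
        have hpos : 0 < ‖w (k + 1)‖ := lt_of_lt_of_le (by positivity) hk1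
        refine ⟨hk1, ?_⟩
        set u : EuclideanSpace ℂ ι := ((‖w (k + 1)‖ : ℂ))⁻¹ • w (k + 1) with hu
        have hu1 : ‖u‖ = 1 := norm_inv_smul hpos
        have hmax := h ((⇑T)^[(k + 1) * n] ω) u hu1
        have hbval : mv (bwd T A n ((⇑T)^[(k + 1) * n] ω)) u
            = ((‖w (k + 1)‖ : ℂ))⁻¹ • w k := by
          rw [hu, mv_smul, wback]
        have hbnorm : ‖mv (bwd T A n ((⇑T)^[(k + 1) * n] ω)) u‖ ≤ 2 / 3 := by
          rw [hbval, norm_smul, norm_inv, Complex.norm_real, Real.norm_eq_abs,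
            abs_of_pos hpos]
          rw [inv_mul_le_iff₀ hpos]
          nlinarith [norm_nonneg (w k)]
        have hf : 3 / 2 ≤ ‖mv (fwd T A n ((⇑T)^[(k + 1) * n] ω)) u‖ := by
          rcases le_max_iff.mp hmax with h' | h'
          · exact h'
          · linarith
        have hfval : mv (fwd T A n ((⇑T)^[(k + 1) * n] ω)) u
            = ((‖w (k + 1)‖ : ℂ))⁻¹ • w (k + 2) := by
          rw [hu, mv_smul, ← wsucc (k + 1)]
        rw [hfval, norm_smul, norm_inv, Complex.norm_real, Real.norm_eq_abs,
          abs_of_pos hpos, inv_mul_eq_div, le_div_iff₀ hpos] at hf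
        linarith
  intro k
  exact (main k).1

lemma expand_all (T : Equiv.Perm Ω) (A : Ω → Matrix ι ι ℂ) (hA : ∀ ω, IsUnit (A ω).det)
    (n : ℕ) (hn : 1 ≤ n) (C : ℝ) (hC1 : 1 ≤ C)
    (hCb : ∀ j ≤ n, ∀ (ω : Ω) (u : EuclideanSpace ℂ ι), ‖mv (fwd T A j ω) u‖ ≤ C * ‖u‖)
    (h : ∀ (ω : Ω) (v : EuclideanSpace ℂ ι), ‖v‖ = 1 →
      3 / 2 ≤ max ‖mv (fwd T A n ω) v‖ ‖mv (bwd T A n ω) v‖)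
    (ω : Ω) (v : EuclideanSpace ℂ ι) (hv : ‖v‖ = 1)
    (h1 : 3 / 2 ≤ ‖mv (fwd T A n ω) v‖) :
    ∀ m : ℕ, C⁻¹ * (((3 : ℝ) / 2) ^ ((n : ℝ)⁻¹)) ^ m ≤ ‖mv (fwd T A m ω) v‖ := by
  intro m
  set k := m / n with hk
  have hrlt : m % n < n := Nat.mod_lt _ (by omega)
  obtain ⟨r, hr, hmr⟩ : ∃ r, r < n ∧ n * k + r = m := ⟨m % n, hrlt, Nat.div_add_mod m n⟩
  have e : (k + 1) * n = n * k + n := by ring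
  have hm1 : m ≤ (k + 1) * n := by rw [e]; linarith [le_of_lt hr]
  have ha : (k + 1) * n - m ≤ n := by
    rw [Nat.sub_le_iff_le_add, e]; linarith
  have hadd : ((k + 1) * n - m) + m = (k + 1) * n := Nat.sub_add_cancel hm1
  have hg := growth T A hA n h ω v hv h1 (k + 1)
  have hsplit := fwd_add T A ((k + 1) * n - m) m ω
  rw [hadd] at hsplit
  have hb : ‖mv (fwd T A ((k + 1) * n) ω) v‖ ≤ C * ‖mv (fwd T A m ω) v‖ := by
    rw [hsplit, mv_mul]
    exact hCb _ ha _ _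
  have hnpos : (0 : ℝ) < n := by exact_mod_cast hn
  have hlam : (((3 : ℝ) / 2) ^ ((n : ℝ)⁻¹)) ^ m ≤ ((3 : ℝ) / 2) ^ (k + 1) := by
    have e1 : (((3 : ℝ) / 2) ^ ((n : ℝ)⁻¹)) ^ m = ((3 : ℝ) / 2) ^ ((n : ℝ)⁻¹ * m) := by
      rw [← Real.rpow_natCast (((3 : ℝ) / 2) ^ ((n : ℝ)⁻¹)) m, ← Real.rpow_mul (by norm_num)]
    have e2 : ((3 : ℝ) / 2) ^ ((k + 1 : ℕ) : ℝ) = ((3 : ℝ) / 2) ^ (k + 1) := by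
      rw [Real.rpow_natCast]
    have hexp : (n : ℝ)⁻¹ * m ≤ ((k + 1 : ℕ) : ℝ) := by
      rw [inv_mul_le_iff₀ hnpos]
      have : (m : ℝ) ≤ ((k + 1) * n : ℕ) := by exact_mod_cast hm1
      push_cast at this ⊢
      nlinarith
    rw [e1, ← e2]
    exact Real.rpow_le_rpow_of_exponent_le (by norm_num) hexp
  have hCpos : (0 : ℝ) < C := by linarith
  rw [inv_mul_le_iff₀ hCpos]
  calc (((3 : ℝ) / 2) ^ ((n : ℝ)⁻¹)) ^ m ≤ ((3 : ℝ) / 2) ^ (k + 1) := hlam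
  _ ≤ ‖mv (fwd T A ((k + 1) * n) ω) v‖ := hg
  _ ≤ C * ‖mv (fwd T A m ω) v‖ := hb

end Stmt5Aux

namespace Stmt5Aux

lemma norm_mv_le_of_unit {M : Matrix ι ι ℂ} {c : ℝ} (hc : 0 ≤ c)
    (h : ∀ u : EuclideanSpace ℂ ι, ‖u‖ = 1 → ‖mv M u‖ ≤ c) (v : EuclideanSpace ℂ ι) :
    ‖mv M v‖ ≤ c * ‖v‖ := by
  by_cases hv : v = 0
  · simp [hv, mv_zero]
  · have hpos : 0 < ‖v‖ := norm_pos_iff.2 hv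
    have hu := h (((‖v‖ : ℂ))⁻¹ • v) (norm_inv_smul hpos)
    rw [mv_smul, norm_smul, norm_inv, Complex.norm_real, Real.norm_eq_abs,
      abs_of_pos hpos, inv_mul_le_iff₀ hpos] at hu
    linarith [hu, mul_comm c ‖v‖]

section Main

variable [MetricSpace Ω] [CompactSpace Ω] {l : ℕ}

local notation "E" => EuclideanSpace ℂ (Fin l ⊕ Fin l)

set_option maxHeartbeats 1000000 in
/-- Joint continuity of `Bfun'` (with `jacobiA`). -/
lemma cont_Bfun (T : Ω ≃ₜ Ω) {D V : Ω → Matrix (Fin l) (Fin l) ℝ}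
    (hD : Continuous D) (hV : Continuous V) (hDinv : ∀ ω, IsUnit (D ω).det) (n : ℕ) :
    Continuous fun q : ℂ × Ω × Metric.sphere (0 : E) 1 =>
      max ‖mv (fwd T.toEquiv (fun ω' => jacobiA (D ω') (V ω') q.1) n q.2.1) (q.2.2 : E)‖
        ‖mv (bwd T.toEquiv (fun ω' => jacobiA (D ω') (V ω') q.1) n q.2.1) (q.2.2 : E)‖ := by
  have hswap : Continuous fun q : ℂ × Ω × Metric.sphere (0 : E) 1 => (q.2.1, q.1) :=
    (continuous_fst.comp continuous_snd).prodMk continuous_fst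
  have hvv : Continuous fun q : ℂ × Ω × Metric.sphere (0 : E) 1 => (q.2.2 : E) :=
    continuous_subtype_val.comp (continuous_snd.comp continuous_snd)
  have hf : Continuous fun q : ℂ × Ω × Metric.sphere (0 : E) 1 =>
      fwd T.toEquiv (fun ω' => jacobiA (D ω') (V ω') q.1) n q.2.1 :=
    by simpa [Function.comp_def] using (cont_fwd T hD hV hDinv n).comp hswap
  have hb : Continuous fun q : ℂ × Ω × Metric.sphere (0 : E) 1 =>
      bwd T.toEquiv (fun ω' => jacobiA (D ω') (V ω') q.1) n q.2.1 :=
    by simpa [Function.comp_def] using (cont_bwd T hD hV hDinv n).comp hswap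
  exact ((cont_mv hf hvv).norm).max ((cont_mv hb hvv).norm)

/-- The finite-time expansion condition implies uniform exponential growth. -/
lemma finite_to_UG (T : Ω ≃ₜ Ω) {D V : Ω → Matrix (Fin l) (Fin l) ℝ}
    (hD : Continuous D) (hV : Continuous V) (hDinv : ∀ ω, IsUnit (D ω).det)
    (z : ℂ) (n : ℕ) (hn : 1 ≤ n)
    (h : ∀ (ω : Ω) (v : E), ‖v‖ = 1 →
      3 / 2 ≤ max ‖mv (fwd T.toEquiv (fun ω' => jacobiA (D ω') (V ω') z) n ω) v‖
        ‖mv (bwd T.toEquiv (fun ω' => jacobiA (D ω') (V ω') z) n ω) v‖) :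
    ∃ β : ℝ, 0 < β ∧ ∃ lam : ℝ, 1 < lam ∧
      ∀ (ω : Ω) (v : E), v ≠ 0 →
        (∀ m : ℕ, β * lam ^ m * ‖v‖ ≤
          ‖mv (fwd T.toEquiv (fun ω' => jacobiA (D ω') (V ω') z) m ω) v‖) ∨
        (∀ m : ℕ, β * lam ^ m * ‖v‖ ≤
          ‖mv (bwd T.toEquiv (fun ω' => jacobiA (D ω') (V ω') z) m ω) v‖) := by
  set A : Ω → Matrix (Fin l ⊕ Fin l) (Fin l ⊕ Fin l) ℂ :=
    fun ω' => jacobiA (D ω') (V ω') z with hAdef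
  have hA : ∀ ω, IsUnit (A ω).det := fun ω => jacobiA_det_unit _ _ _ (hDinv ω)
  -- a uniform bound on the transfer matrices up to time n
  have hbdd : ∀ j : ℕ, ∃ c : ℝ, ∀ p : Ω × Metric.sphere (0 : E) 1,
      max ‖mv (fwd T.toEquiv A j p.1) (p.2 : E)‖ ‖mv (bwd T.toEquiv A j p.1) (p.2 : E)‖ ≤ c := by
    intro j
    have hcont := (cont_Bfun T hD hV hDinv j).comp
      ((continuous_const (y := z)).prodMk continuous_id)
    obtain ⟨c, hc⟩ := (isCompact_range hcont).bddAbove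
    exact ⟨c, fun p => hc (Set.mem_range_self p)⟩
  choose c hc using hbdd
  set C : ℝ := 1 + ∑ j ∈ Finset.range (n + 1), max (c j) 0 with hCdef
  have hC1 : 1 ≤ C := by
    have : 0 ≤ ∑ j ∈ Finset.range (n + 1), max (c j) 0 :=
      Finset.sum_nonneg fun j _ => le_max_right _ _
    simp [hCdef]; linarith
  have hCj : ∀ j ≤ n, c j ≤ C := by
    intro j hj
    have h1 : max (c j) 0 ≤ ∑ i ∈ Finset.range (n + 1), max (c i) 0 :=
      Finset.single_le_sum (f := fun i => max (c i) 0) (fun i _ => le_max_right _ _) (Finset.mem_range.2 (Nat.lt_succ_of_le hj))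
    have h2 : c j ≤ max (c j) 0 := le_max_left _ _
    simp only [hCdef]; linarith
  have hCpos : (0 : ℝ) < C := by linarith
  have hunitf : ∀ j ≤ n, ∀ (ω : Ω) (u : E), ‖u‖ = 1 → ‖mv (fwd T.toEquiv A j ω) u‖ ≤ C := by
    intro j hj ω u hu
    have := hc j (ω, ⟨u, by rwa [mem_sphere_zero_iff_norm]⟩)
    exact le_trans (le_trans (le_max_left _ _) this) (hCj j hj)
  have hunitb : ∀ j ≤ n, ∀ (ω : Ω) (u : E), ‖u‖ = 1 → ‖mv (bwd T.toEquiv A j ω) u‖ ≤ C := by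
    intro j hj ω u hu
    have := hc j (ω, ⟨u, by rwa [mem_sphere_zero_iff_norm]⟩)
    exact le_trans (le_trans (le_max_right _ _) this) (hCj j hj)
  have hCf : ∀ j ≤ n, ∀ (ω : Ω) (u : E), ‖mv (fwd T.toEquiv A j ω) u‖ ≤ C * ‖u‖ :=
    fun j hj ω u => norm_mv_le_of_unit hCpos.le (fun u' hu' => hunitf j hj ω u' hu') u
  have hCb : ∀ j ≤ n, ∀ (ω : Ω) (u : E), ‖mv (bwd T.toEquiv A j ω) u‖ ≤ C * ‖u‖ :=
    fun j hj ω u => norm_mv_le_of_unit hCpos.le (fun u' hu' => hunitb j hj ω u' hu') u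
  -- the reversed cocycle
  set A' : Ω → Matrix (Fin l ⊕ Fin l) (Fin l ⊕ Fin l) ℂ :=
    fun ω' => (A (T.toEquiv.symm ω'))⁻¹ with hA'def
  have hA' : ∀ ω, IsUnit (A' ω).det := fun ω => isUnit_nonsing_inv_det _ (hA _)
  have hrevf : ∀ (j : ℕ) (ω : Ω), fwd T.toEquiv.symm A' j ω = bwd T.toEquiv A j ω :=
    fun j ω => (bwd_eq_fwd T.toEquiv A j ω).symm
  have hrevb : ∀ (j : ℕ) (ω : Ω), bwd T.toEquiv.symm A' j ω = fwd T.toEquiv A j ω :=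
    fun j ω => (fwd_eq_bwd T.toEquiv A hA j ω).symm
  have h' : ∀ (ω : Ω) (v : E), ‖v‖ = 1 →
      3 / 2 ≤ max ‖mv (fwd T.toEquiv.symm A' n ω) v‖ ‖mv (bwd T.toEquiv.symm A' n ω) v‖ := by
    intro ω v hv
    rw [hrevf, hrevb, max_comm]
    exact h ω v hv
  have hCf' : ∀ j ≤ n, ∀ (ω : Ω) (u : E), ‖mv (fwd T.toEquiv.symm A' j ω) u‖ ≤ C * ‖u‖ := by
    intro j hj ω u
    rw [hrevf]
    exact hCb j hj ω u
  -- the exponential rate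
  set lam : ℝ := ((3 : ℝ) / 2) ^ ((n : ℝ)⁻¹) with hlamdef
  have hlam : 1 < lam := by
    rw [hlamdef, Real.one_lt_rpow_iff_of_pos (by norm_num)]
    left
    constructor
    · norm_num
    · have : (0 : ℝ) < n := by exact_mod_cast hn
      positivity
  refine ⟨C⁻¹, by positivity, lam, hlam, ?_⟩
  intro ω v hv0
  have hvpos : 0 < ‖v‖ := norm_pos_iff.2 hv0
  set u : E := ((‖v‖ : ℂ))⁻¹ • v with hudef
  have hu1 : ‖u‖ = 1 := norm_inv_smul hvpos
  have hscalef : ∀ (M : Matrix (Fin l ⊕ Fin l) (Fin l ⊕ Fin l) ℂ) (b : ℝ),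
      b ≤ ‖mv M u‖ → b * ‖v‖ ≤ ‖mv M v‖ := by
    intro M b hb
    rw [hudef, mv_smul, norm_smul, norm_inv, Complex.norm_real, Real.norm_eq_abs,
      abs_of_pos hvpos] at hb
    calc b * ‖v‖ ≤ ‖v‖⁻¹ * ‖mv M v‖ * ‖v‖ := by nlinarith
    _ = ‖mv M v‖ := by field_simp
  rcases le_max_iff.mp (h ω u hu1) with hcase | hcase
  · left
    intro m
    have key := expand_all T.toEquiv A hA n hn C hC1 hCf h ω u hu1 hcase m
    exact hscalef _ _ key
  · right
    intro m
    have hcase' : 3 / 2 ≤ ‖mv (fwd T.toEquiv.symm A' n ω) u‖ := by rw [hrevf]; exact hcase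
    have key := expand_all T.toEquiv.symm A' hA' n hn C hC1 hCf' h' ω u hu1 hcase' m
    rw [hrevf] at key
    exact hscalef _ _ key

end Main

end Stmt5Aux


open Stmt5Aux Topology Metric in
/-- lower semicontinuity in `z` of `sup_{(ω,v)} Bₙ(z, ω, v)`, openness of
the finite-time expansion condition, and openness of the set of energies where the
Jacobi cocycle satisfies uniform exponential growth. -/
theorem stmt5 {l : ℕ} [MetricSpace Ω] [CompactSpace Ω] (T : Ω ≃ₜ Ω)
    (D V : Ω → Matrix (Fin l) (Fin l) ℝ) (hD : Continuous D) (hV : Continuous V)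
    (hDinv : ∀ ω, IsUnit (D ω).det) :
    (∀ n : ℕ, LowerSemicontinuous (fun z : ℂ =>
      ⨆ p : Ω × Metric.sphere (0 : EuclideanSpace ℂ (Fin l ⊕ Fin l)) 1,
        Bfun T.toEquiv D V n z p.1 (p.2 : EuclideanSpace ℂ (Fin l ⊕ Fin l)))) ∧
    (∀ n : ℕ, IsOpen {z : ℂ |
      3 / 2 < ⨆ p : Ω × Metric.sphere (0 : EuclideanSpace ℂ (Fin l ⊕ Fin l)) 1,
        Bfun T.toEquiv D V n z p.1 (p.2 : EuclideanSpace ℂ (Fin l ⊕ Fin l))}) ∧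
    IsOpen {z : ℂ | UG T.toEquiv D V z} := by
  have contB : ∀ n : ℕ, Continuous fun q :
      ℂ × Ω × Metric.sphere (0 : EuclideanSpace ℂ (Fin l ⊕ Fin l)) 1 =>
      Bfun T.toEquiv D V n q.1 q.2.1 (q.2.2 : EuclideanSpace ℂ (Fin l ⊕ Fin l)) := by
    intro n
    have key : (fun q : ℂ × Ω × Metric.sphere (0 : EuclideanSpace ℂ (Fin l ⊕ Fin l)) 1 =>
        Bfun T.toEquiv D V n q.1 q.2.1 (q.2.2 : EuclideanSpace ℂ (Fin l ⊕ Fin l))) = fun q =>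
        max ‖mv (fwd T.toEquiv (fun ω' => jacobiA (D ω') (V ω') q.1) n q.2.1)
            (q.2.2 : EuclideanSpace ℂ (Fin l ⊕ Fin l))‖
          ‖mv (bwd T.toEquiv (fun ω' => jacobiA (D ω') (V ω') q.1) n q.2.1)
            (q.2.2 : EuclideanSpace ℂ (Fin l ⊕ Fin l))‖ := by
      funext q
      rw [Bfun, transfer_coe, transfer_neg_coe]
    rw [key]
    exact cont_Bfun T hD hV hDinv n
  have part1 : ∀ n : ℕ, LowerSemicontinuous (fun z : ℂ =>
      ⨆ p : Ω × Metric.sphere (0 : EuclideanSpace ℂ (Fin l ⊕ Fin l)) 1,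
        Bfun T.toEquiv D V n z p.1 (p.2 : EuclideanSpace ℂ (Fin l ⊕ Fin l))) := by
    intro n
    apply lowerSemicontinuous_ciSup
    · intro z
      exact (isCompact_range ((contB n).comp (Continuous.prodMk_right z))).bddAbove
    · intro p
      exact ((contB n).comp (continuous_id.prodMk continuous_const)).lowerSemicontinuous
  refine ⟨part1, fun n => (part1 n).isOpen_preimage (3 / 2), ?_⟩
  rw [isOpen_iff_mem_nhds]
  intro z₀ hz₀
  obtain ⟨β, hβ, lam, hlam, hUG⟩ := hz₀
  obtain ⟨N, hN⟩ := pow_unbounded_of_one_lt (2 / β) hlam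
  set n := N + 1 with hn
  have hβn : 2 ≤ β * lam ^ n := by
    have h1 : lam ^ N ≤ lam ^ n := pow_le_pow_right₀ (le_of_lt hlam) (by omega)
    rw [div_lt_iff₀ hβ] at hN
    nlinarith
  have hpt : ∀ p : Ω × Metric.sphere (0 : EuclideanSpace ℂ (Fin l ⊕ Fin l)) 1,
      (2 : ℝ) ≤ Bfun T.toEquiv D V n z₀ p.1 p.2 := by
    rintro ⟨ω, v, hv⟩
    have hv1 : ‖(v : EuclideanSpace ℂ (Fin l ⊕ Fin l))‖ = 1 := by
      rwa [mem_sphere_zero_iff_norm] at hv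
    have hv0 : (v : EuclideanSpace ℂ (Fin l ⊕ Fin l)) ≠ 0 := by
      intro h0; rw [h0, norm_zero] at hv1; norm_num at hv1
    rcases hUG ω v hv0 with hc | hc
    · have hc' := hc n
      rw [hv1, mul_one] at hc'
      exact le_trans (le_trans hβn hc') (le_max_left _ _)
    · have hc' := hc n
      rw [hv1, mul_one] at hc'
      exact le_trans (le_trans hβn hc') (le_max_right _ _)
  have hev : ∀ᶠ z in 𝓝 z₀,
      ∀ p ∈ (Set.univ : Set (Ω × Metric.sphere (0 : EuclideanSpace ℂ (Fin l ⊕ Fin l)) 1)),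
        (3 : ℝ) / 2 < Bfun T.toEquiv D V n z p.1 p.2 := by
    apply isCompact_univ.eventually_forall_of_forall_eventually
    intro p _
    have hc := (contB n).continuousAt (x := (z₀, p))
    exact hc.eventually (eventually_gt_nhds (lt_of_lt_of_le (by norm_num) (hpt p)))
  refine Filter.mem_of_superset hev ?_
  intro z hz
  have hfin := finite_to_UG T hD hV hDinv z n (by omega) (fun ω v hv1 => by
    have := hz (ω, ⟨v, (mem_sphere_zero_iff_norm (E := EuclideanSpace ℂ (Fin l ⊕ Fin l))).2 hv1⟩)
      (Set.mem_univ _)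
    simp only [Bfun, transfer_coe, transfer_neg_coe] at this
    exact le_of_lt this)
  obtain ⟨β', hβ', lam', hlam', H⟩ := hfin
  refine ⟨β', hβ', lam', hlam', fun ω v hv => ?_⟩
  rcases H ω v hv with hcase | hcase
  · left
    intro m
    rw [transfer_coe]
    exact hcase m
  · right
    intro m
    rw [transfer_neg_coe]
    exact hcase m
end
end
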